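/- Let n and m be positive integers, let C be an m×n real matrix, D an invertible m×m real matrix, θ an invertible n×n real matrix, and F_r an n×n real matrix with μ₁(F_r) < 0. Then for every ε > 0 there exist an invertible m×m real matrix ρ, an m×m real matrix Q, and an m×n real matrix R such that the generalized unreduced Jacobian F = [[F_r + θ·Rᵀ·C·θ⁻¹, θ·Rᵀ·D·ρ⁻¹], [Qᵀ·C·θ⁻¹, Qᵀ·D·ρ⁻¹]] satisfies μ₁(F) ≤ μ₁(F_r)·(1 − ε). -/

import Mathlib

open Matrix Finset

/-- The 1-norm matrix measure: `μ₁(M) = max_j ( M j j + ∑_{i ≠ j} |M i j| )`. -/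
noncomputable def muOne {k : Type*} [Fintype k] [DecidableEq k]
    (M : Matrix k k ℝ) : ℝ :=
  ⨆ j, (M j j + ∑ i ∈ Finset.univ.erase j, |M i j|)

lemma muOne_le {k : Type*} [Fintype k] [DecidableEq k] [Nonempty k]
    (M : Matrix k k ℝ) (b : ℝ)
    (h : ∀ j, M j j + ∑ i ∈ Finset.univ.erase j, |M i j| ≤ b) : muOne M ≤ b :=
  ciSup_le h

lemma le_muOne {k : Type*} [Fintype k] [DecidableEq k]
    (M : Matrix k k ℝ) (j : k) :
    M j j + ∑ i ∈ Finset.univ.erase j, |M i j| ≤ muOne M := by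
  have := le_ciSup (f := fun j => M j j + ∑ i ∈ Finset.univ.erase j, |M i j|)
    (Set.Finite.bddAbove (Set.finite_range _)) j
  simpa [muOne] using this

theorem stmt8 (n m : ℕ) (hn : 0 < n) (hm : 0 < m)
    (C : Matrix (Fin m) (Fin n) ℝ)
    (D : Matrix (Fin m) (Fin m) ℝ) (hD : IsUnit D.det)
    (θ : Matrix (Fin n) (Fin n) ℝ) (hθ : IsUnit θ.det)
    (Fr : Matrix (Fin n) (Fin n) ℝ) (hFr : muOne Fr < 0)
    (ε : ℝ) (hε : 0 < ε) :
    ∃ (ρ : Matrix (Fin m) (Fin m) ℝ) (Q : Matrix (Fin m) (Fin m) ℝ)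
      (R : Matrix (Fin m) (Fin n) ℝ), IsUnit ρ.det ∧
      muOne (Matrix.fromBlocks (Fr + θ * Rᵀ * C * θ⁻¹) (θ * Rᵀ * D * ρ⁻¹)
        (Qᵀ * C * θ⁻¹) (Qᵀ * D * ρ⁻¹)) ≤ muOne Fr * (1 - ε) := by
  haveI : Nonempty (Fin n) := ⟨⟨0, hn⟩⟩
  haveI : Nonempty (Fin m) := ⟨⟨0, hm⟩⟩
  set μ := muOne Fr with hμdef
  have hμ : μ < 0 := hFr
  set A : Matrix (Fin m) (Fin n) ℝ := D⁻¹ * C * θ⁻¹ with hA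
  set K : ℝ := (∑ j, ∑ i, |A i j|) + 1 with hK
  have hK0 : 0 < K := by
    have : (0:ℝ) ≤ ∑ j, ∑ i, |A i j| :=
      Finset.sum_nonneg fun j _ => Finset.sum_nonneg fun i _ => abs_nonneg _
    linarith
  set δ : ℝ := (-ε * μ) / K with hδ
  have hδ0 : 0 < δ := div_pos (by nlinarith) hK0
  set c : ℝ := -|μ * (1 - ε)| - 1 with hc
  have hc0 : c < 0 := by
    have := abs_nonneg (μ * (1 - ε)); simp only [hc]; linarith
  have hcle : c ≤ μ * (1 - ε) := by
    have := neg_abs_le (μ * (1 - ε)); simp only [hc]; linarith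
  have hδne : δ ≠ 0 := ne_of_gt hδ0
  have hcne : c ≠ 0 := ne_of_lt hc0
  refine ⟨(δ/c) • 1, δ • (D⁻¹)ᵀ, 0, ?_, ?_⟩
  · rw [Matrix.det_smul, Matrix.det_one, mul_one]
    exact IsUnit.pow _ (Ne.isUnit (div_ne_zero hδne hcne))
  · have hρinv : ((δ/c) • (1 : Matrix (Fin m) (Fin m) ℝ))⁻¹ = (c/δ) • 1 := by
      apply Matrix.inv_eq_right_inv
      rw [Matrix.smul_mul, Matrix.mul_smul, one_mul, smul_smul]
      rw [div_mul_div_comm, mul_comm δ c, div_self (by positivity), one_smul]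
    have hQT : (δ • (D⁻¹)ᵀ)ᵀ = δ • D⁻¹ := by
      rw [Matrix.transpose_smul, Matrix.transpose_transpose]
    have hB21 : (δ • (D⁻¹)ᵀ)ᵀ * C * θ⁻¹ = δ • A := by
      rw [hQT, Matrix.smul_mul, Matrix.smul_mul, hA]
    have hB22 : (δ • (D⁻¹)ᵀ)ᵀ * D * ((δ/c) • (1 : Matrix (Fin m) (Fin m) ℝ))⁻¹
        = c • 1 := by
      rw [hQT, hρinv, Matrix.smul_mul, Matrix.nonsing_inv_mul D hD,
        Matrix.smul_mul, Matrix.one_mul, smul_smul, mul_comm δ (c/δ),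
        div_mul_cancel₀ _ hδne]
    simp only [Matrix.transpose_zero, Matrix.mul_zero, Matrix.zero_mul, add_zero, hB21, hB22]
    apply muOne_le
    rintro (j | j)
    · -- first block column
      have hsum : ∑ i ∈ Finset.univ.erase (Sum.inl j : Fin n ⊕ Fin m),
          |(Matrix.fromBlocks Fr 0 (δ • A) (c • (1 : Matrix (Fin m) (Fin m) ℝ))) i (Sum.inl j)|
          = (∑ i, |Fr i j| - |Fr j j|) + ∑ i, |δ * A i j| := by
        rw [Finset.sum_erase_eq_sub (Finset.mem_univ _)]
        rw [Fintype.sum_sum_type]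
        simp [Matrix.fromBlocks, sub_eq_iff_eq_add]
        ring
      rw [hsum]
      have h1 : Fr j j + ∑ i ∈ Finset.univ.erase j, |Fr i j| ≤ μ := le_muOne Fr j
      have h2 : ∑ i ∈ Finset.univ.erase j, |Fr i j| = ∑ i, |Fr i j| - |Fr j j| :=
        Finset.sum_erase_eq_sub (Finset.mem_univ _)
      have h3 : ∑ i, |δ * A i j| ≤ δ * K := by
        have : ∑ i, |δ * A i j| = δ * ∑ i, |A i j| := by
          rw [Finset.mul_sum]
          exact Finset.sum_congr rfl fun i _ => by
            rw [abs_mul, abs_of_pos hδ0]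
        rw [this]
        apply mul_le_mul_of_nonneg_left _ (le_of_lt hδ0)
        have : ∑ i, |A i j| ≤ ∑ j', ∑ i, |A i j'| := by
          apply Finset.single_le_sum (f := fun j' => ∑ i, |A i j'|)
            (fun j' _ => Finset.sum_nonneg fun i _ => abs_nonneg _) (Finset.mem_univ j)
        linarith
      have h4 : δ * K = -ε * μ := div_mul_cancel₀ _ (ne_of_gt hK0)
      have hdiag : (Matrix.fromBlocks Fr 0 (δ • A) (c • (1 : Matrix (Fin m) (Fin m) ℝ))) (Sum.inl j) (Sum.inl j) = Fr j j := rfl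
      rw [hdiag]
      nlinarith [h1, h2, h3, h4]
    · -- second block column
      have hsum : ∑ i ∈ Finset.univ.erase (Sum.inr j : Fin n ⊕ Fin m),
          |(Matrix.fromBlocks Fr 0 (δ • A) (c • (1 : Matrix (Fin m) (Fin m) ℝ))) i (Sum.inr j)| = 0 := by
        apply Finset.sum_eq_zero
        rintro (i | i) hi
        · simp [Matrix.fromBlocks]
        · have : i ≠ j := by
            intro h; subst h; exact (Finset.mem_erase.mp hi).1 rfl
          simp [Matrix.fromBlocks, Matrix.one_apply, this]
      have hdiag : (Matrix.fromBlocks Fr 0 (δ • A) (c • (1 : Matrix (Fin m) (Fin m) ℝ))) (Sum.inr j) (Sum.inr j) = c := by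
        simp [Matrix.fromBlocks, Matrix.one_apply]
      rw [hsum, hdiag, add_zero]
      exact hcle
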